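/- Let b₁,…,b_ℓ ∈ B(H). Then b₁,…,b_ℓ are linearly independent if and only if there exist finitely many vectors ξ₁,…,ξ_m ∈ H such that the ℓ×ℓ matrix Σₖ Q(b, ξₖ) is positive definite, where Q(b, ξ) = (⟨bⱼξ, bᵢξ⟩)_{i,j=1}^ℓ. -/

import Mathlib

open Matrix
open scoped ComplexOrder

/-- The square root of a positive semidefinite matrix (the definition Mathlib had as
`Matrix.PosSemidef.sqrt`, since removed). -/
noncomputable def Matrix.PosSemidef.sqrt {n : Type*} [Fintype n] [DecidableEq n]
    {A : Matrix n n ℂ} (hA : A.PosSemidef) : Matrix n n ℂ :=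
  hA.1.eigenvectorUnitary.1 * diagonal ((↑) ∘ (√·) ∘ hA.1.eigenvalues) *
  (star hA.1.eigenvectorUnitary : Matrix n n ℂ)

theorem Matrix.PosSemidef.posSemidef_sqrt {n : Type*} [Fintype n] [DecidableEq n]
    {A : Matrix n n ℂ} (hA : A.PosSemidef) : hA.sqrt.PosSemidef := by
  unfold Matrix.PosSemidef.sqrt
  have h := PosSemidef.mul_mul_conjTranspose_same
    (posSemidef_diagonal_iff.mpr fun i => by
      simp only [Function.comp_apply, Complex.zero_le_real]
      exact Real.sqrt_nonneg _ : (diagonal ((↑) ∘ (√·) ∘ hA.1.eigenvalues : n → ℂ)).PosSemidef)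
    (hA.1.eigenvectorUnitary.1)
  convert h using 2
  exact Matrix.star_eq_conjTranspose _

/-- The product `√X * Y * √X` is positive semidefinite. -/
theorem sqrt_mul_mul_sqrt_posSemidef {n : Type*} [Fintype n] [DecidableEq n]
    {X Y : Matrix n n ℂ} (hX : X.PosSemidef) (hY : Y.PosSemidef) :
    (hX.sqrt * Y * hX.sqrt).PosSemidef := by
  have h := hY.conjTranspose_mul_mul_same (B := hX.sqrt)
  rwa [hX.posSemidef_sqrt.isHermitian.eq] at h

/-- The tracial geometric mean `tgm(X,Y) = trace √(√X·Y·√X)`. -/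
noncomputable def tgm {n : Type*} [Fintype n] [DecidableEq n]
    {X Y : Matrix n n ℂ} (hX : X.PosSemidef) (hY : Y.PosSemidef) : ℝ :=
  ((sqrt_mul_mul_sqrt_posSemidef hX hY).sqrt.trace).re


lemma exists_finset_iInf_eq_bot' {R V : Type*} [Ring R] [AddCommGroup V] [Module R V]
    [IsArtinian R V] {ι : Type*} (K : ι → Submodule R V) (h : ⨅ ξ, K ξ = ⊥) :
    ∃ s : Finset ι, ⨅ ξ ∈ s, K ξ = ⊥ := by
  classical
  obtain ⟨N, ⟨s, rfl⟩, hmin⟩ := IsArtinian.set_has_minimal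
    {N | ∃ s : Finset ι, N = ⨅ ξ ∈ s, K ξ} ⟨⊤, ∅, by simp⟩
  refine ⟨s, ?_⟩
  have hle : ∀ ξ : ι, (⨅ ξ ∈ s, K ξ) ≤ K ξ := by
    intro ξ
    by_contra hno
    have h1 : ((⨅ ζ ∈ insert ξ s, K ζ) : Submodule R V) < ⨅ ξ ∈ s, K ξ := by
      rw [Finset.iInf_insert]
      refine lt_of_le_of_ne inf_le_right fun heq => hno (heq ▸ inf_le_left)
    exact hmin _ ⟨insert ξ s, rfl⟩ h1
  rw [← le_bot_iff, ← h]
  exact le_iInf hle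

lemma quad_eq' {H : Type*} [NormedAddCommGroup H] [InnerProductSpace ℂ H]
    {ℓ m : ℕ} (b : Fin ℓ → (H →L[ℂ] H)) (ξ : Fin m → H) (x : Fin ℓ → ℂ) :
    star x ⬝ᵥ (Matrix.of fun i j => ∑ k, (inner ℂ ((b i) (ξ k)) ((b j) (ξ k)) : ℂ)) *ᵥ x
      = ∑ k, ((‖(∑ i, x i • b i) (ξ k)‖ : ℝ) : ℂ)^2 := by
  have h1 : ∀ ξ0 : H, (inner ℂ ((∑ i, x i • b i) ξ0) ((∑ i, x i • b i) ξ0) : ℂ)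
      = ∑ i, ∑ j, (starRingEnd ℂ) (x i) * ((inner ℂ ((b i) ξ0) ((b j) ξ0) : ℂ) * x j) := by
    intro ξ0
    simp only [ContinuousLinearMap.sum_apply, ContinuousLinearMap.coe_smul',
      Pi.smul_apply, sum_inner, inner_sum, inner_smul_left, inner_smul_right]
    rw [Finset.sum_comm]
    refine Finset.sum_congr rfl fun i _ => ?_
    rw [Finset.mul_sum]
    exact Finset.sum_congr rfl fun j _ => by ring
  simp only [dotProduct, mulVec, Matrix.of_apply, Pi.star_apply, RCLike.star_def]
  calc ∑ i, (starRingEnd ℂ) (x i) * ∑ j, (∑ k, (inner ℂ ((b i) (ξ k)) ((b j) (ξ k)) : ℂ)) * x j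
      = ∑ i, ∑ j, ∑ k, (starRingEnd ℂ) (x i) * ((inner ℂ ((b i) (ξ k)) ((b j) (ξ k)) : ℂ) * x j) := by
        refine Finset.sum_congr rfl fun i _ => ?_
        rw [Finset.mul_sum]
        refine Finset.sum_congr rfl fun j _ => ?_
        rw [Finset.sum_mul, Finset.mul_sum]
    _ = ∑ i, ∑ k, ∑ j, (starRingEnd ℂ) (x i) * ((inner ℂ ((b i) (ξ k)) ((b j) (ξ k)) : ℂ) * x j) := by
        exact Finset.sum_congr rfl fun i _ => by rw [Finset.sum_comm]
    _ = ∑ k, ∑ i, ∑ j, (starRingEnd ℂ) (x i) * ((inner ℂ ((b i) (ξ k)) ((b j) (ξ k)) : ℂ) * x j) := by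
        rw [Finset.sum_comm]
    _ = ∑ k, ((‖(∑ i, x i • b i) (ξ k)‖ : ℝ) : ℂ)^2 := by
        refine Finset.sum_congr rfl fun k _ => ?_
        rw [← h1, inner_self_eq_norm_sq_to_K]
        norm_cast

/-- Evaluation of `c ↦ (∑ i, c i • b i) ξ0` as a linear map. -/
def evalLin {H : Type*} [NormedAddCommGroup H] [InnerProductSpace ℂ H]
    {ℓ : ℕ} (b : Fin ℓ → (H →L[ℂ] H)) (ξ0 : H) : (Fin ℓ → ℂ) →ₗ[ℂ] H where
  toFun := fun c => ∑ i, c i • (b i ξ0)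
  map_add' := by intro c d; simp [add_smul, Finset.sum_add_distrib]
  map_smul' := by intro a c; simp [smul_smul, Finset.smul_sum]

/-- `b₁,…,b_ℓ ∈ B(H)` are linearly independent iff there are finitely many vectors
`ξ₁,…,ξ_m ∈ H` such that `Σₖ Q(b, ξₖ)` is positive definite, where
`Q(b, ξ)ᵢⱼ = ⟨bⱼξ, bᵢξ⟩`. -/
theorem linearIndependent_iff_exists_posDef_sum
    {H : Type*} [NormedAddCommGroup H] [InnerProductSpace ℂ H] [CompleteSpace H]
    {ℓ : ℕ} (hℓ : 1 ≤ ℓ) (b : Fin ℓ → (H →L[ℂ] H)) :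
    LinearIndependent ℂ b ↔
      ∃ (m : ℕ) (ξ : Fin m → H),
        (Matrix.of fun i j => ∑ k, (inner ℂ ((b i) (ξ k)) ((b j) (ξ k)) : ℂ)).PosDef := by
  have happ : ∀ (x : Fin ℓ → ℂ) (ξ0 : H), (∑ i, x i • b i) ξ0 = evalLin b ξ0 x := by
    intro x ξ0
    simp [evalLin, ContinuousLinearMap.sum_apply]
  constructor
  · intro hli
    have hbot : ⨅ ξ0 : H, LinearMap.ker (evalLin b ξ0) = ⊥ := by
      rw [eq_bot_iff]
      intro c hc
      simp only [Submodule.mem_iInf, LinearMap.mem_ker] at hc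
      have hT : (∑ i, c i • b i) = 0 := by
        ext ξ0
        rw [happ c ξ0, hc ξ0]; rfl
      have := Fintype.linearIndependent_iff.mp hli c hT
      exact Submodule.mem_bot ℂ |>.mpr (funext this)
    obtain ⟨s, hs⟩ := exists_finset_iInf_eq_bot' _ hbot
    refine ⟨s.card, fun k => (s.equivFin.symm k : H), posDef_iff_dotProduct_mulVec.mpr ⟨?_, ?_⟩⟩
    · -- Hermitian
      ext i j
      simp only [conjTranspose_apply, Matrix.of_apply, star_sum, RCLike.star_def,
        inner_conj_symm]
    · intro x hx
      rw [quad_eq']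
      have hxs : x ∉ (⨅ ξ0 ∈ s, LinearMap.ker (evalLin b ξ0)) := by
        rw [hs]; simpa using hx
      simp only [Submodule.mem_iInf, LinearMap.mem_ker, not_forall] at hxs
      obtain ⟨ξ0, hξ0s, hξ0⟩ := hxs
      have : ∃ k : Fin s.card, ((s.equivFin.symm k : H)) = ξ0 := by
        refine ⟨s.equivFin ⟨ξ0, hξ0s⟩, by simp⟩
      obtain ⟨k0, hk0⟩ := this
      refine Finset.sum_pos' (fun k _ => ?_) ⟨k0, Finset.mem_univ _, ?_⟩
      · rw [← Complex.ofReal_pow, Complex.zero_le_real]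
        positivity
      · rw [← Complex.ofReal_pow, Complex.zero_lt_real, happ, hk0]
        exact pow_pos (norm_pos_iff.mpr hξ0) 2
  · rintro ⟨m, ξ, hpd⟩
    rw [Fintype.linearIndependent_iff]
    intro g hg i
    by_contra hgi
    have hgne : g ≠ 0 := fun h0 => hgi (congrFun h0 i)
    have := hpd.dotProduct_mulVec_pos hgne
    rw [quad_eq'] at this
    simp [hg] at this
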